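/- Let F be a Fréchet space and {X_n} a sequence of F-valued random variables. Suppose for every L > 0 there is a decomposition X_n = Y_n^L + Z_n^L where the laws of {Y_n^L}_n are tight on F, and for every η > 0, lim_{L→∞} sup_n P(ρ(Z_n^L, 0) > η) = 0 (ρ the metric of F). Then the laws of {X_n} are tight on F. -/

import Mathlib

open MeasureTheory Filter Topology Pointwise

/-- Tightness via decomposition: if `X_n = Y_n^L + Z_n^L` where for each `L` the
`{Y_n^L}_n` induce tight laws on the complete metric group `F` (translation-invariant
metric), and `sup_n P(dist(Z_n^L, 0) > η) → 0` as `L → ∞` for every `η > 0`, then the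
laws of `{X_n}` are tight on `F`. -/
theorem tightness_decomposition {F : Type*} [AddCommGroup F] [MetricSpace F] [CompleteSpace F]
    [MeasurableSpace F] [BorelSpace F]
    (hinv : ∀ x y z : F, dist (x + z) (y + z) = dist x y)
    {Ω : Type*} [MeasurableSpace Ω] (P : Measure Ω) [IsProbabilityMeasure P]
    (X : ℕ → Ω → F) (hX : ∀ n, Measurable (X n))
    (Y Z : ℝ → ℕ → Ω → F)
    (hdec : ∀ L > (0 : ℝ), ∀ n ω, X n ω = Y L n ω + Z L n ω)
    (hYtight : ∀ L > (0 : ℝ), ∀ ε > (0 : ℝ), ∃ K : Set F, IsCompact K ∧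
      ∀ n, P {ω | Y L n ω ∉ K} ≤ ENNReal.ofReal ε)
    (hZ : ∀ η > (0 : ℝ),
      Tendsto (fun L : ℝ => ⨆ n, P {ω | η < dist (Z L n ω) 0}) atTop (𝓝 0)) :
    ∀ ε > (0 : ℝ), ∃ K : Set F, IsCompact K ∧
      ∀ n, P {ω | X n ω ∉ K} ≤ ENNReal.ofReal ε := by
  intro ε hε
  -- radii and error budgets
  set η : ℕ → ℝ := fun j => 1 / (j + 1) with hη
  have hηpos : ∀ j : ℕ, 0 < η j := fun j => by positivity
  set δ : ℕ → ℝ := fun j => ε / 2 ^ (j + 2) with hδ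
  have hδpos : ∀ j : ℕ, 0 < δ j := fun j => by positivity
  -- for each j choose a scale L j and a compact K j
  have hchoice : ∀ j : ℕ, ∃ L : ℝ, 0 < L ∧ ∃ K : Set F, IsCompact K ∧
      (∀ n, P {ω | Y L n ω ∉ K} ≤ ENNReal.ofReal (δ j)) ∧
      (∀ n, P {ω | η j < dist (Z L n ω) 0} ≤ ENNReal.ofReal (δ j)) := by
    intro j
    have hofpos : (0 : ENNReal) < ENNReal.ofReal (δ j) := ENNReal.ofReal_pos.mpr (hδpos j)
    have hev : ∀ᶠ L : ℝ in atTop,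
        (⨆ n, P {ω | η j < dist (Z L n ω) 0}) < ENNReal.ofReal (δ j) :=
      (hZ (η j) (hηpos j)).eventually_lt_const hofpos
    obtain ⟨L, hL1, hL2⟩ := (hev.and (eventually_gt_atTop (0 : ℝ))).exists
    obtain ⟨K, hK, hKb⟩ := hYtight L hL2 (δ j) (hδpos j)
    refine ⟨L, hL2, K, hK, hKb, fun n => ?_⟩
    exact le_trans (le_iSup (fun n => P {ω | η j < dist (Z L n ω) 0}) n) hL1.le
  choose L hLpos K hKcomp hKY hKZ using hchoice
  -- the compact set
  set A : ℕ → Set F := fun j => closure (K j + Metric.closedBall (0 : F) (η j)) with hA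
  refine ⟨⋂ j, A j, ?_, ?_⟩
  · -- compactness: closed + totally bounded
    apply TotallyBounded.isCompact_of_isClosed
    · rw [Metric.totallyBounded_iff]
      intro r hr
      -- pick j with 2 * η j < r
      obtain ⟨N, hN⟩ := exists_nat_gt (2 / r)
      have hN2 : 2 * η N < r := by
        have h1 : 2 / r < (N : ℝ) + 1 := lt_trans hN (by linarith)
        have h2 : (0 : ℝ) < (N : ℝ) + 1 := by positivity
        rw [div_lt_iff₀ hr] at h1
        have h1' : (2 : ℝ) < r * ((N : ℝ) + 1) := by linarith [h1]
        simp only [hη]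
        rw [mul_one_div, div_lt_iff₀ h2]
        linarith
      -- cover K N by finitely many balls of radius η N
      obtain ⟨t, htfin, htcov⟩ := Metric.totallyBounded_iff.mp
        (hKcomp N).totallyBounded (η N) (hηpos N)
      refine ⟨t, htfin, ?_⟩
      intro p hp
      have hpA : p ∈ A N := Set.mem_iInter.mp hp N
      have hrpos : 0 < r - 2 * η N := by linarith
      obtain ⟨q, hq, hpq⟩ := Metric.mem_closure_iff.mp hpA (r - 2 * η N) hrpos
      obtain ⟨k, hk, z, hz, hkz⟩ := Set.mem_add.mp hq
      have hqk : dist q k ≤ η N := by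
        have : dist q k = dist z 0 := by
          rw [← hkz, add_comm k z]
          have := hinv z 0 k
          rw [zero_add] at this
          exact this
        rw [this]
        simpa [Metric.mem_closedBall] using hz
      obtain ⟨x, hxt, hkx⟩ := Set.mem_iUnion₂.mp (htcov hk)
      refine Set.mem_iUnion₂.mpr ⟨x, hxt, ?_⟩
      have : dist p x ≤ dist p q + dist q k + dist k x := dist_triangle4 p q k x
      have hkx' : dist k x < η N := by simpa [Metric.mem_ball] using hkx
      simp only [Metric.mem_ball]
      linarith
    · exact isClosed_iInter fun j => isClosed_closure
  · -- measure bound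
    intro n
    -- bad events
    have hsub : {ω | X n ω ∉ ⋂ j, A j} ⊆
        ⋃ j, ({ω | Y (L j) n ω ∉ K j} ∪ {ω | η j < dist (Z (L j) n ω) 0}) := by
      intro ω hω
      simp only [Set.mem_setOf_eq, Set.mem_iInter, not_forall] at hω
      obtain ⟨j, hj⟩ := hω
      refine Set.mem_iUnion.mpr ⟨j, ?_⟩
      by_contra hcon
      simp only [Set.mem_union, Set.mem_setOf_eq, not_or, not_not, not_lt] at hcon
      obtain ⟨hYin, hZle⟩ := hcon
      apply hj
      apply subset_closure
      refine Set.mem_add.mpr ⟨Y (L j) n ω, hYin, Z (L j) n ω, ?_, (hdec (L j) (hLpos j) n ω).symm⟩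
      simpa [Metric.mem_closedBall, dist_comm] using hZle
    calc P {ω | X n ω ∉ ⋂ j, A j}
        ≤ P (⋃ j, ({ω | Y (L j) n ω ∉ K j} ∪ {ω | η j < dist (Z (L j) n ω) 0})) :=
          measure_mono hsub
      _ ≤ ∑' j, P ({ω | Y (L j) n ω ∉ K j} ∪ {ω | η j < dist (Z (L j) n ω) 0}) :=
          measure_iUnion_le _
      _ ≤ ∑' j, (ENNReal.ofReal (δ j) + ENNReal.ofReal (δ j)) := by
          refine ENNReal.tsum_le_tsum fun j => ?_
          exact le_trans (measure_union_le _ _) (add_le_add (hKY j n) (hKZ j n))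
      _ = ∑' j, ENNReal.ofReal (2 * δ j) := by
          congr 1; funext j
          rw [two_mul, ENNReal.ofReal_add (hδpos j).le (hδpos j).le]
      _ = ENNReal.ofReal (∑' j, 2 * δ j) := by
          rw [ENNReal.ofReal_tsum_of_nonneg (fun j => by positivity)]
          have : Summable (fun j : ℕ => 2 * δ j) := by
            simp only [hδ]
            apply Summable.mul_left
            apply Summable.mul_left ε
            simpa [Function.comp_def] using (summable_geometric_of_lt_one (by norm_num : (0:ℝ) ≤ 1/2)
              (by norm_num : (1:ℝ)/2 < 1)).comp_injective (add_left_injective 2)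
          exact this
      _ ≤ ENNReal.ofReal ε := by
          apply ENNReal.ofReal_le_ofReal
          have hsum : ∑' j : ℕ, 2 * δ j = ε := by
            have h1 : ∀ j : ℕ, 2 * δ j = ε / 2 * (1 / 2) ^ j := by
              intro j
              simp only [hδ]
              rw [pow_add]
              field_simp
              ring_nf
              rw [← mul_pow]; norm_num
            simp only [h1]
            rw [tsum_mul_left, tsum_geometric_of_lt_one (by norm_num) (by norm_num)]
            norm_num
          exact hsum.le
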